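/- Let M = (M(α), M(β)) be a representation of the Kronecker quiver (two arrows 1 ⇉ 2) with M(α), M(β) ∈ Mat_{d_2,d_1}(k). For n ≥ 2, dim Hom(P_n, M) = (n-1)d_1 - rank P_{n-1}(M), where P_n is the preprojective Kronecker representation ([E_{n-1}; 0], [0; E_{n-1}]) of dimension vector (n-1,n), and P_{n-1}(M) is the (n-2)×(n-1) block matrix with M(β) on the block diagonal and M(α) on the block superdiagonal. Also dim Hom(P_1, M) = d_2. -/

import Mathlib

/-- `[E_{n-1}; 0]`: the `n × (n-1)` matrix defining the arrow `α` of the preprojective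
Kronecker representation `P_n`. -/
def prepA {k : Type} [Field k] (n : ℕ) : Matrix (Fin n) (Fin (n - 1)) k :=
  fun i j => if (i : ℕ) = (j : ℕ) then 1 else 0

/-- `[0; E_{n-1}]`: the `n × (n-1)` matrix defining the arrow `β` of the preprojective
Kronecker representation `P_n`. -/
def prepB {k : Type} [Field k] (n : ℕ) : Matrix (Fin n) (Fin (n - 1)) k :=
  fun i j => if (i : ℕ) = (j : ℕ) + 1 then 1 else 0

/-- The space of morphisms of Kronecker representations `P_n → M`: pairs
`(X, Y)` with `M(α) X = Y P_n(α)` and `M(β) X = Y P_n(β)`. -/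
def homFromPrep {k : Type} [Field k] (d1 d2 n : ℕ)
    (Mα Mβ : Matrix (Fin d2) (Fin d1) k) :
    Submodule k (Matrix (Fin d1) (Fin (n - 1)) k × Matrix (Fin d2) (Fin n) k) where
  carrier := {p | Mα * p.1 = p.2 * prepA n ∧ Mβ * p.1 = p.2 * prepB n}
  add_mem' := by
    rintro x y ⟨hx1, hx2⟩ ⟨hy1, hy2⟩
    constructor <;> simp only [Prod.fst_add, Prod.snd_add, Matrix.mul_add,
      Matrix.add_mul, hx1, hx2, hy1, hy2]
    all_goals exact (Matrix.add_mul _ _ _).symm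
  zero_mem' := by
    simp
    exact ⟨(Matrix.zero_mul _).symm, (Matrix.zero_mul _).symm⟩
  smul_mem' := by
    rintro c x ⟨hx1, hx2⟩
    constructor <;> simp only [Prod.smul_fst, Prod.smul_snd, Matrix.mul_smul,
      Matrix.smul_mul, hx1, hx2]
    all_goals exact (Matrix.smul_mul _ _ _).symm

/-- The block matrix `P_n(M)` with `n - 1` block rows and `n` block columns, with
`M(β)` on the block diagonal and `M(α)` on the block superdiagonal. -/
def prepBlockMat {k : Type} [Field k] (d1 d2 : ℕ) (Mα Mβ : Matrix (Fin d2) (Fin d1) k)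
    (n : ℕ) : Matrix (Fin (n - 1) × Fin d2) (Fin n × Fin d1) k :=
  fun rp cq =>
    if (cq.1 : ℕ) = (rp.1 : ℕ) then Mβ rp.2 cq.2
    else if (cq.1 : ℕ) = (rp.1 : ℕ) + 1 then Mα rp.2 cq.2 else 0

section
variable {k : Type} [Field k] {d1 d2 m : ℕ} (Mα Mβ : Matrix (Fin d2) (Fin d1) k)

theorem mul_prepA (Y : Matrix (Fin d2) (Fin (m + 2)) k)
    (Z : Matrix (Fin (m + 2)) (Fin (m + 1)) k) (hZ : Z = prepA (m + 2))
    (r : Fin d2) (j : Fin (m + 1)) :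
    (Y * Z) r j = Y r j.castSucc := by
  subst hZ
  rw [Matrix.mul_apply, Finset.sum_eq_single j.castSucc]
  · simp [prepA]
  · intro i _ hi
    rw [show prepA (m+2) i j = (0:k) from if_neg (by simpa [Fin.ext_iff] using hi), mul_zero]
  · simp

theorem mul_prepB (Y : Matrix (Fin d2) (Fin (m + 2)) k)
    (Z : Matrix (Fin (m + 2)) (Fin (m + 1)) k) (hZ : Z = prepB (m + 2))
    (r : Fin d2) (j : Fin (m + 1)) :
    (Y * Z) r j = Y r j.succ := by
  subst hZ
  rw [Matrix.mul_apply, Finset.sum_eq_single j.succ]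
  · simp [prepB]
  · intro i _ hi
    rw [show prepB (m+2) i j = (0:k) from if_neg (by simpa [Fin.ext_iff] using hi), mul_zero]
  · simp

theorem prepBlock_apply (i : Fin m) (r : Fin d2) (j : Fin (m + 1)) (q : Fin d1) :
    prepBlockMat d1 d2 Mα Mβ (m + 1) (i, r) (j, q)
      = if (j : ℕ) = (i : ℕ) then Mβ r q
        else if (j : ℕ) = (i : ℕ) + 1 then Mα r q else 0 := rfl

theorem prepBlock_mulVec (x : Fin (m + 1) × Fin d1 → k) (i : Fin m) (r : Fin d2) :
    (prepBlockMat d1 d2 Mα Mβ (m + 1)).mulVec x (i, r)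
      = (∑ q, Mβ r q * x (i.castSucc, q)) + ∑ q, Mα r q * x (i.succ, q) := by
  rw [Matrix.mulVec, dotProduct, Fintype.sum_prod_type]
  have key : ∀ j : Fin (m + 1), ∀ q : Fin d1,
      prepBlockMat d1 d2 Mα Mβ (m + 1) (i, r) (j, q) * x (j, q)
        = (if j = i.castSucc then Mβ r q * x (j, q) else 0)
          + (if j = i.succ then Mα r q * x (j, q) else 0) := by
    intro j q
    rw [prepBlock_apply]
    split_ifs <;>
      first
        | ring1
        | (exfalso; simp only [Fin.ext_iff, Fin.coe_castSucc, Fin.val_succ] at *; omega)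
  simp_rw [key, Finset.sum_add_distrib]
  congr 1
  · rw [Finset.sum_comm]
    simp [Finset.sum_ite_eq']
  · rw [Finset.sum_comm]
    simp [Finset.sum_ite_eq']
end

section Main
variable {k : Type} [Field k] {d1 d2 : ℕ} (Mα Mβ : Matrix (Fin d2) (Fin d1) k)

theorem mem_homFromPrep {n : ℕ} (p : Matrix (Fin d1) (Fin (n - 1)) k × Matrix (Fin d2) (Fin n) k) :
    p ∈ homFromPrep d1 d2 n Mα Mβ ↔ Mα * p.1 = p.2 * prepA n ∧ Mβ * p.1 = p.2 * prepB n :=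
  Iff.rfl

theorem key_dim (m : ℕ) :
    Module.finrank k ↥(homFromPrep d1 d2 (m + 2) Mα Mβ)
      = (m + 1) * d1 - (prepBlockMat d1 d2 Mα Mβ (m + 1)).rank := by
  classical
  set P : Matrix (Fin m × Fin d2) (Fin (m + 1) × Fin d1) k :=
    prepBlockMat d1 d2 Mα Mβ (m + 1) with hP
  -- the linear map sending a morphism (X, Y) to the sign-twisted vectorization of X
  let f : ↥(homFromPrep d1 d2 (m + 2) Mα Mβ) →ₗ[k] (Fin (m + 1) × Fin d1 → k) :=
    { toFun := fun p jq => (-1 : k) ^ (jq.1 : ℕ) * p.val.1 jq.2 jq.1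
      map_add' := by
        intro p q
        funext jq
        simp only [Submodule.coe_add, Prod.fst_add, Matrix.add_apply, Pi.add_apply]
        ring
      map_smul' := by
        intro c p
        funext jq
        simp only [SetLike.val_smul, Prod.smul_fst, Matrix.smul_apply, smul_eq_mul,
          RingHom.id_apply, Pi.smul_apply]
        ring }
  have hinj : Function.Injective f := by
    rw [← LinearMap.ker_eq_bot]
    apply LinearMap.ker_eq_bot'.mpr
    rintro ⟨⟨X, Y⟩, hmem⟩ hf
    obtain ⟨hA, hB⟩ := (mem_homFromPrep Mα Mβ _).mp hmem
    have hX : X = 0 := by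
      ext q j
      have := congrFun hf (j, q)
      simp only [f] at this
      have hne : ((-1 : k) ^ (j : ℕ)) ≠ 0 := by
        apply pow_ne_zero; exact neg_ne_zero.mpr one_ne_zero
      exact (mul_eq_zero.mp this).resolve_left hne
    subst hX
    have hY : Y = 0 := by
      ext r i
      by_cases hi : (i : ℕ) < m + 1
      · have e : ((⟨(i : ℕ), hi⟩ : Fin (m + 1)).castSucc) = i := by
          apply Fin.ext; simp
        have h1 := (mul_prepA Y (prepA (m + 2)) rfl r (⟨(i : ℕ), hi⟩ : Fin (m + 1))).symm.trans
          (congrFun (congrFun hA r) (⟨(i : ℕ), hi⟩ : Fin (m + 1))).symm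
        rw [e] at h1
        rw [h1]
        simp [Matrix.mul_apply]
      · have him : (i : ℕ) = m + 1 := by omega
        have e : ((⟨m, Nat.lt_succ_self m⟩ : Fin (m + 1)).succ) = i := by
          apply Fin.ext; simp [him]
        have h1 := (mul_prepB Y (prepB (m + 2)) rfl r (⟨m, Nat.lt_succ_self m⟩ : Fin (m + 1))).symm.trans
          (congrFun (congrFun hB r) (⟨m, Nat.lt_succ_self m⟩ : Fin (m + 1))).symm
        rw [e] at h1
        rw [h1]
        simp [Matrix.mul_apply]
    subst hY
    rfl
  have hrange : LinearMap.range f = LinearMap.ker P.mulVecLin := by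
    apply le_antisymm
    · rintro _ ⟨⟨⟨X, Y⟩, hmem⟩, rfl⟩
      obtain ⟨hA, hB⟩ := (mem_homFromPrep Mα Mβ _).mp hmem
      simp only [LinearMap.mem_ker, Matrix.mulVecLin_apply]
      funext ir
      obtain ⟨i, r⟩ := ir
      rw [show (0 : Fin m × Fin d2 → k) (i, r) = 0 from rfl]
      rw [prepBlock_mulVec]
      have c1 : ∀ q, ((fun jq => (-1 : k) ^ (jq.1 : ℕ) * X jq.2 jq.1) (i.castSucc, q))
          = (-1 : k) ^ (i : ℕ) * X q i.castSucc := by intro q; simp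
      have c2 : ∀ q, ((fun jq => (-1 : k) ^ (jq.1 : ℕ) * X jq.2 jq.1) (i.succ, q))
          = (-1 : k) ^ ((i : ℕ) + 1) * X q i.succ := by intro q; simp
      show (∑ q, Mβ r q * ((-1 : k) ^ ((i.castSucc : Fin (m+1)) : ℕ) * X q i.castSucc))
          + (∑ q, Mα r q * ((-1 : k) ^ ((i.succ : Fin (m+1)) : ℕ) * X q i.succ)) = 0
      have hb : ∑ q, Mβ r q * ((-1 : k) ^ ((i.castSucc : Fin (m+1)) : ℕ) * X q i.castSucc)
          = (-1 : k) ^ (i : ℕ) * (Mβ * X) r i.castSucc := by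
        rw [Matrix.mul_apply, Finset.mul_sum]
        apply Finset.sum_congr rfl
        intro q _
        simp only [Fin.coe_castSucc]
        ring
      have ha : ∑ q, Mα r q * ((-1 : k) ^ ((i.succ : Fin (m+1)) : ℕ) * X q i.succ)
          = (-1 : k) ^ ((i : ℕ) + 1) * (Mα * X) r i.succ := by
        rw [Matrix.mul_apply, Finset.mul_sum]
        apply Finset.sum_congr rfl
        intro q _
        simp only [Fin.val_succ]
        ring
      rw [hb, ha]
      have hb2 : (Mβ * X) r i.castSucc = Y r (i.castSucc).succ :=
        (congrFun (congrFun hB r) i.castSucc).trans (mul_prepB Y (prepB (m + 2)) rfl r i.castSucc)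
      have ha2 : (Mα * X) r i.succ = Y r (i.succ).castSucc :=
        (congrFun (congrFun hA r) i.succ).trans (mul_prepA Y (prepA (m + 2)) rfl r i.succ)
      have he : (i.castSucc).succ = (i.succ).castSucc := by apply Fin.ext; simp
      rw [hb2, ha2, ← he, pow_succ]
      ring
    · intro x hx
      simp only [LinearMap.mem_ker, Matrix.mulVecLin_apply] at hx
      set X : Matrix (Fin d1) (Fin (m + 1)) k := fun q j => (-1 : k) ^ (j : ℕ) * x (j, q) with hXdef
      set Y : Matrix (Fin d2) (Fin (m + 2)) k := fun r i =>
        if h : (i : ℕ) < m + 1 then (Mα * X) r ⟨(i : ℕ), h⟩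
        else (Mβ * X) r ⟨m, Nat.lt_succ_self m⟩ with hYdef
      have hker : ∀ (i : Fin m) (r : Fin d2),
          (∑ q, Mβ r q * x (i.castSucc, q)) + ∑ q, Mα r q * x (i.succ, q) = 0 := by
        intro i r
        rw [← prepBlock_mulVec]
        rw [hx]
        rfl
      have hmem : (X, Y) ∈ homFromPrep d1 d2 (m + 2) Mα Mβ := by
        rw [mem_homFromPrep]
        constructor
        · funext r j
          refine Eq.trans ?_ (mul_prepA Y (prepA (m + 2)) rfl r j).symm
          simp only [hYdef]
          have hj : ((j.castSucc : Fin (m + 2)) : ℕ) < m + 1 := by have := j.isLt; simp; omega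
          rw [dif_pos hj]
          exact congrArg _ (Fin.ext (by simp))
        · funext r j
          refine Eq.trans ?_ (mul_prepB Y (prepB (m + 2)) rfl r j).symm
          simp only [hYdef]
          by_cases hj : (j : ℕ) < m
          · have hj1 : ((j.succ : Fin (m + 2)) : ℕ) < m + 1 := by simp; omega
            rw [dif_pos hj1]
            have hk := hker ⟨(j : ℕ), hj⟩ r
            have e1 : ((⟨(j : ℕ), hj⟩ : Fin m).castSucc) = j := by apply Fin.ext; simp
            have e2 : ((⟨(j : ℕ), hj⟩ : Fin m).succ) = (⟨(j : ℕ) + 1, by omega⟩ : Fin (m + 1)) := by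
              apply Fin.ext; simp
            rw [e1, e2] at hk
            have lhs : (Mβ * X) r j = (-1 : k) ^ (j : ℕ) * ∑ q, Mβ r q * x (j, q) := by
              rw [Matrix.mul_apply, Finset.mul_sum]
              apply Finset.sum_congr rfl
              intro q _
              simp only [hXdef]
              ring
            have rhs : (Mα * X) r ⟨((j.succ : Fin (m+2)) : ℕ), hj1⟩
                = (-1 : k) ^ ((j : ℕ) + 1) * ∑ q, Mα r q * x (⟨(j : ℕ) + 1, by omega⟩, q) := by
              rw [Matrix.mul_apply, Finset.mul_sum]
              apply Finset.sum_congr rfl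
              intro q _
              simp only [hXdef]
              simp only [Fin.val_succ]
              ring
            rw [lhs, rhs]
            have : ∑ q, Mβ r q * x (j, q) = -∑ q, Mα r q * x (⟨(j : ℕ) + 1, by omega⟩, q) :=
              eq_neg_of_add_eq_zero_left hk
            rw [this, pow_succ]
            ring
          · have hj1 : ¬ ((j.succ : Fin (m + 2)) : ℕ) < m + 1 := by simp; omega
            rw [dif_neg hj1]
            have hjv : j = (⟨m, Nat.lt_succ_self m⟩ : Fin (m + 1)) := by
              apply Fin.ext
              have h2 := j.isLt
              simp only [Fin.val_mk]
              omega
            exact congrArg _ hjv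
      refine ⟨⟨(X, Y), hmem⟩, ?_⟩
      funext jq
      show (-1 : k) ^ (jq.1 : ℕ) * X jq.2 jq.1 = x jq
      simp only [hXdef]
      rw [← mul_assoc, ← mul_pow]
      simp
  have e1 : Module.finrank k ↥(homFromPrep d1 d2 (m + 2) Mα Mβ)
      = Module.finrank k ↥(LinearMap.ker P.mulVecLin) := by
    rw [(LinearEquiv.ofInjective f hinj).finrank_eq, hrange]
  have e2 := LinearMap.finrank_range_add_finrank_ker P.mulVecLin
  rw [Module.finrank_pi, Fintype.card_prod, Fintype.card_fin, Fintype.card_fin] at e2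
  have e3 : P.rank = Module.finrank k ↥(LinearMap.range P.mulVecLin) := rfl
  rw [e1, e3]
  omega

end Main

/-- for a Kronecker representation `M = (M(α), M(β))`,
`dim Hom(P_n, M) = (n-1) d_1 - rank P_{n-1}(M)` for `n ≥ 2`, and
`dim Hom(P_1, M) = d_2`.  (Note `rank P_1(M) = 0` since `P_1(M)` is empty.) -/
theorem dim_hom_from_preprojective {k : Type} [Field k] (d1 d2 : ℕ)
    (Mα Mβ : Matrix (Fin d2) (Fin d1) k) :
    (∀ n : ℕ, 2 ≤ n →
      Module.finrank k (homFromPrep d1 d2 n Mα Mβ)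
        = (n - 1) * d1 - (prepBlockMat d1 d2 Mα Mβ (n - 1)).rank) ∧
    Module.finrank k (homFromPrep d1 d2 1 Mα Mβ) = d2 := by
  constructor
  · intro n hn
    obtain ⟨m, rfl⟩ : ∃ m, n = m + 2 := ⟨n - 2, by omega⟩
    exact key_dim Mα Mβ m
  · have htop : homFromPrep d1 d2 1 Mα Mβ = ⊤ := by
      apply eq_top_iff.mpr
      intro p _
      rw [mem_homFromPrep]
      constructor <;> (funext r j; exact j.elim0)
    rw [htop, finrank_top, Module.finrank_prod, Module.finrank_matrix, Module.finrank_matrix]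
    simp
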